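/- Let η̄ be a non-degenerate direction hyperbolic with respect to index 1 (a₁(η̄) = 0, κ₁(η̄) ≠ κ₂(η̄)). Then, as η → η̄ nontangentially, lim a₁²(ξ)/(ν±²(ξ) − κ₁(ξ)) = C ∓ iD|ξ| where γ²C = 1 − γ²/(κ₁(η̄) − κ₂(η̄)) and γ²D = κ/ω₁(η̄) > 0, provided the hyperbolic eigenvalues ν±(ξ) → ±|ξ|ω₁(η̄) and satisfy the secular equation 1 = iκ|ξ|²/ν + γ²a₁²(ξ)/(ν² − κ₁(ξ)) + γ²a₂²(ξ)/(ν² − κ₂(ξ)). -/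

import Mathlib

open Filter Complex Topology

theorem aux_limit
    {ι : Type*} (l : Filter ι) [l.NeBot]
    (κ γ R : ℝ) (hγ : γ ≠ 0)
    (κ₁ κ₂ a₁ a₂ : ι → ℝ) (κ₂b : ℝ)
    (hκ₂ : Tendsto κ₂ l (nhds κ₂b))
    (hsum : ∀ n, a₁ n ^ 2 + a₂ n ^ 2 = 1)
    (ha₁ : Tendsto a₁ l (nhds 0))
    (ν : ι → ℂ) (L : ℂ) (hL : L ≠ 0)
    (hLd : L ^ 2 - ((R ^ 2 * κ₂b : ℝ) : ℂ) ≠ 0)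
    (hν : Tendsto ν l (nhds L))
    (hsec : ∀ n, (1 : ℂ) = I * κ * R ^ 2 / ν n
        + γ ^ 2 * ((R * a₁ n : ℝ) : ℂ) ^ 2 / (ν n ^ 2 - (R ^ 2 * κ₁ n : ℝ))
        + γ ^ 2 * ((R * a₂ n : ℝ) : ℂ) ^ 2 / (ν n ^ 2 - (R ^ 2 * κ₂ n : ℝ))) :
    Tendsto (fun n => ((R * a₁ n : ℝ) : ℂ) ^ 2 / (ν n ^ 2 - (R ^ 2 * κ₁ n : ℝ)))
      l (nhds ((1 - I * κ * R ^ 2 / L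
        - (γ : ℂ) ^ 2 * ((R ^ 2 : ℝ) : ℂ) / (L ^ 2 - ((R ^ 2 * κ₂b : ℝ) : ℂ))) / (γ : ℂ) ^ 2)) := by
  have hγc : ((γ : ℝ) : ℂ) ^ 2 ≠ 0 := pow_ne_zero 2 (ofReal_ne_zero.mpr hγ)
  have hEq : ∀ n, ((R * a₁ n : ℝ) : ℂ) ^ 2 / (ν n ^ 2 - (R ^ 2 * κ₁ n : ℝ))
      = (1 - I * κ * R ^ 2 / ν n
        - (γ : ℂ) ^ 2 * ((R * a₂ n : ℝ) : ℂ) ^ 2 / (ν n ^ 2 - (R ^ 2 * κ₂ n : ℝ))) / (γ : ℂ) ^ 2 := by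
    intro n
    rw [eq_div_iff hγc]
    linear_combination (-1 : ℂ) * hsec n
  -- tendsto of components
  have hB : Tendsto (fun n => ((R * a₂ n : ℝ) : ℂ) ^ 2) l (nhds (((R ^ 2 : ℝ) : ℂ))) := by
    have hr : Tendsto (fun n => R ^ 2 * (1 - a₁ n ^ 2)) l (nhds (R ^ 2 * (1 - 0 ^ 2))) :=
      tendsto_const_nhds.mul (tendsto_const_nhds.sub (ha₁.pow 2))
    have hr' : Tendsto (fun n => (R * a₂ n) ^ 2) l (nhds (R ^ 2)) := by
      simpa using hr.congr (fun n => by nlinarith [hsum n])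
    exact Tendsto.congr (fun n => ofReal_pow _ 2)
      ((Complex.continuous_ofReal.tendsto _).comp hr')
  have hden : Tendsto (fun n => ν n ^ 2 - ((R ^ 2 * κ₂ n : ℝ) : ℂ)) l
      (nhds (L ^ 2 - ((R ^ 2 * κ₂b : ℝ) : ℂ))) := by
    have h1 : Tendsto (fun n => ((R ^ 2 * κ₂ n : ℝ) : ℂ)) l (nhds ((R ^ 2 * κ₂b : ℝ) : ℂ)) :=
      (Complex.continuous_ofReal.tendsto _).comp (tendsto_const_nhds.mul hκ₂)
    exact (hν.pow 2).sub h1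
  have hmain : Tendsto (fun n => (1 - I * κ * R ^ 2 / ν n
        - (γ : ℂ) ^ 2 * ((R * a₂ n : ℝ) : ℂ) ^ 2 / (ν n ^ 2 - (R ^ 2 * κ₂ n : ℝ))) / (γ : ℂ) ^ 2) l
      (nhds ((1 - I * κ * R ^ 2 / L
        - (γ : ℂ) ^ 2 * ((R ^ 2 : ℝ) : ℂ) / (L ^ 2 - ((R ^ 2 * κ₂b : ℝ) : ℂ))) / (γ : ℂ) ^ 2)) := by
    exact ((tendsto_const_nhds.sub (tendsto_const_nhds.div hν hL)).sub
      (((tendsto_const_nhds.mul hB)).div hden hLd)).div_const _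
  exact hmain.congr (fun n => (hEq n).symm)

/-- Near a non-degenerate direction `η̄` hyperbolic with respect to index 1, the
non-tangential limits `a₁²(ξ)/(ν±²(ξ) − κ₁(ξ)) → C ∓ iD|ξ|` hold, where
`γ²C = 1 − γ²/(κ₁(η̄) − κ₂(η̄))` and `γ²D = κ/ω₁(η̄) > 0`, provided the hyperbolic
eigenvalues `ν±` tend to `±|ξ|ω₁(η̄)` and satisfy the secular equation. -/
theorem hyperbolic_eigenvalue_limit
    {ι : Type*} (l : Filter ι) [l.NeBot]
    (κ γ R : ℝ) (hκ : 0 < κ) (hγ : γ ≠ 0) (hR : 0 < R)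
    (κ₁ κ₂ a₁ a₂ : ι → ℝ) (κ₁b κ₂b : ℝ)
    (hκ₁b : 0 < κ₁b) (hκ₂b : 0 < κ₂b) (hnd : κ₁b ≠ κ₂b)
    (hκ₁ : Tendsto κ₁ l (nhds κ₁b)) (hκ₂ : Tendsto κ₂ l (nhds κ₂b))
    (hsum : ∀ n, a₁ n ^ 2 + a₂ n ^ 2 = 1)
    (ha₁ : Tendsto a₁ l (nhds 0))
    (νp νm : ι → ℂ)
    (hνp : Tendsto νp l (nhds ((R * Real.sqrt κ₁b : ℝ) : ℂ)))
    (hνm : Tendsto νm l (nhds ((-(R * Real.sqrt κ₁b) : ℝ) : ℂ)))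
    (hνp0 : ∀ n, νp n ≠ 0) (hνm0 : ∀ n, νm n ≠ 0)
    (hνp1 : ∀ n, νp n ^ 2 ≠ ((R ^ 2 * κ₁ n : ℝ) : ℂ))
    (hνp2 : ∀ n, νp n ^ 2 ≠ ((R ^ 2 * κ₂ n : ℝ) : ℂ))
    (hνm1 : ∀ n, νm n ^ 2 ≠ ((R ^ 2 * κ₁ n : ℝ) : ℂ))
    (hνm2 : ∀ n, νm n ^ 2 ≠ ((R ^ 2 * κ₂ n : ℝ) : ℂ))
    (hsecp : ∀ n, (1 : ℂ) = I * κ * R ^ 2 / νp n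
        + γ ^ 2 * ((R * a₁ n : ℝ) : ℂ) ^ 2 / (νp n ^ 2 - (R ^ 2 * κ₁ n : ℝ))
        + γ ^ 2 * ((R * a₂ n : ℝ) : ℂ) ^ 2 / (νp n ^ 2 - (R ^ 2 * κ₂ n : ℝ)))
    (hsecm : ∀ n, (1 : ℂ) = I * κ * R ^ 2 / νm n
        + γ ^ 2 * ((R * a₁ n : ℝ) : ℂ) ^ 2 / (νm n ^ 2 - (R ^ 2 * κ₁ n : ℝ))
        + γ ^ 2 * ((R * a₂ n : ℝ) : ℂ) ^ 2 / (νm n ^ 2 - (R ^ 2 * κ₂ n : ℝ)))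
    (C D : ℝ)
    (hC : γ ^ 2 * C = 1 - γ ^ 2 / (κ₁b - κ₂b))
    (hD : γ ^ 2 * D = κ / Real.sqrt κ₁b) :
    0 < D ∧
    Tendsto (fun n => ((R * a₁ n : ℝ) : ℂ) ^ 2 / (νp n ^ 2 - (R ^ 2 * κ₁ n : ℝ)))
      l (nhds ((C : ℂ) - I * D * R)) ∧
    Tendsto (fun n => ((R * a₁ n : ℝ) : ℂ) ^ 2 / (νm n ^ 2 - (R ^ 2 * κ₁ n : ℝ)))
      l (nhds ((C : ℂ) + I * D * R)) := by
  have hγ2 : (0:ℝ) < γ ^ 2 := by positivity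
  have hs : 0 < Real.sqrt κ₁b := Real.sqrt_pos.mpr hκ₁b
  have hDpos : 0 < D := by
    by_contra h
    push_neg at h
    nlinarith [hD, div_pos hκ hs, mul_nonpos_of_nonneg_of_nonpos hγ2.le h]
  -- common facts
  have hγc : ((γ : ℝ) : ℂ) ^ 2 ≠ 0 := pow_ne_zero 2 (ofReal_ne_zero.mpr hγ)
  have hRc : ((R : ℝ) : ℂ) ≠ 0 := ofReal_ne_zero.mpr hR.ne'
  have hsc : ((Real.sqrt κ₁b : ℝ) : ℂ) ≠ 0 := ofReal_ne_zero.mpr hs.ne'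
  have hs2 : ((Real.sqrt κ₁b : ℝ) : ℂ) ^ 2 = (κ₁b : ℂ) := by
    rw [← ofReal_pow, Real.sq_sqrt hκ₁b.le]
  have hsub : (κ₁b : ℂ) - (κ₂b : ℂ) ≠ 0 := by
    rw [← ofReal_sub]; exact ofReal_ne_zero.mpr (sub_ne_zero.mpr hnd)
  have hCc : ((γ:ℂ)) ^ 2 * C = 1 - (γ:ℂ) ^ 2 / ((κ₁b:ℂ) - κ₂b) := by
    have := congrArg (Complex.ofReal) hC; push_cast at this; exact this
  have hDc : ((γ:ℂ)) ^ 2 * D = (κ:ℂ) / ((Real.sqrt κ₁b : ℝ) : ℂ) := by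
    have := congrArg (Complex.ofReal) hD; push_cast at this; exact this
  have hLp : (((R * Real.sqrt κ₁b : ℝ) : ℂ)) ≠ 0 := by
    rw [ofReal_mul]; exact mul_ne_zero hRc hsc
  have hLm : (((-(R * Real.sqrt κ₁b) : ℝ) : ℂ)) ≠ 0 := by
    rw [ofReal_neg]; exact neg_ne_zero.mpr hLp
  have hden : ∀ L : ℂ, L ^ 2 = ((R ^ 2 * κ₁b : ℝ) : ℂ) →
      L ^ 2 - ((R ^ 2 * κ₂b : ℝ) : ℂ) ≠ 0 := by
    intro L hL2
    rw [hL2]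
    push_cast
    intro h
    apply hsub
    have h2 : ((R:ℂ))^2 * ((κ₁b:ℂ) - κ₂b) = 0 := by ring_nf; linear_combination h
    rcases mul_eq_zero.mp h2 with h3 | h3
    · exact absurd h3 (pow_ne_zero 2 hRc)
    · exact h3
  have hL2p : (((R * Real.sqrt κ₁b : ℝ) : ℂ)) ^ 2 = ((R ^ 2 * κ₁b : ℝ) : ℂ) := by
    push_cast
    rw [mul_pow, hs2]
  have hL2m : (((-(R * Real.sqrt κ₁b) : ℝ) : ℂ)) ^ 2 = ((R ^ 2 * κ₁b : ℝ) : ℂ) := by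
    push_cast
    rw [neg_pow, mul_pow, hs2]; push_cast; ring
  have hp := aux_limit l κ γ R hγ κ₁ κ₂ a₁ a₂ κ₂b hκ₂ hsum ha₁ νp _ hLp
    (hden _ hL2p) hνp hsecp
  have hm := aux_limit l κ γ R hγ κ₁ κ₂ a₁ a₂ κ₂b hκ₂ hsum ha₁ νm _ hLm
    (hden _ hL2m) hνm hsecm
  have hden2 : ((R:ℂ))^2 * (κ₁b:ℂ) - ((R:ℂ))^2 * (κ₂b:ℂ) ≠ 0 := by
    rw [show ((R:ℂ))^2 * (κ₁b:ℂ) - ((R:ℂ))^2 * (κ₂b:ℂ)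
        = ((κ₁b:ℂ) - (κ₂b:ℂ)) * ((R:ℂ))^2 by ring]
    exact mul_ne_zero hsub (pow_ne_zero 2 hRc)
  have e1 : I * (κ:ℂ) * (R:ℂ) ^ 2 / ((R:ℂ) * ((Real.sqrt κ₁b : ℝ):ℂ))
      = I * (R:ℂ) * ((κ:ℂ) / ((Real.sqrt κ₁b : ℝ):ℂ)) := by
    field_simp
  have e2 : (γ:ℂ) ^ 2 * (R:ℂ) ^ 2 / ((R:ℂ) ^ 2 * (κ₁b:ℂ) - (R:ℂ) ^ 2 * (κ₂b:ℂ))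
      = (γ:ℂ) ^ 2 / ((κ₁b:ℂ) - (κ₂b:ℂ)) := by
    rw [show ((R:ℂ))^2 * (κ₁b:ℂ) - ((R:ℂ))^2 * (κ₂b:ℂ)
        = ((κ₁b:ℂ) - (κ₂b:ℂ)) * ((R:ℂ))^2 by ring]
    rw [div_mul_eq_div_div_swap]
    rw [mul_div_assoc, div_self (pow_ne_zero 2 hRc), mul_one]
  refine ⟨hDpos, ?_, ?_⟩
  · have heq : (1 - I * κ * R ^ 2 / ((R * Real.sqrt κ₁b : ℝ) : ℂ)
        - (γ : ℂ) ^ 2 * ((R ^ 2 : ℝ) : ℂ) /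
          (((R * Real.sqrt κ₁b : ℝ) : ℂ) ^ 2 - ((R ^ 2 * κ₂b : ℝ) : ℂ))) / (γ : ℂ) ^ 2
        = (C : ℂ) - I * D * R := by
      rw [hL2p, div_eq_iff hγc]
      push_cast
      rw [e1, e2, ← hDc]
      linear_combination (-1 : ℂ) * hCc
    rwa [heq] at hp
  · have heq : (1 - I * κ * R ^ 2 / ((-(R * Real.sqrt κ₁b) : ℝ) : ℂ)
        - (γ : ℂ) ^ 2 * ((R ^ 2 : ℝ) : ℂ) /
          (((-(R * Real.sqrt κ₁b) : ℝ) : ℂ) ^ 2 - ((R ^ 2 * κ₂b : ℝ) : ℂ))) / (γ : ℂ) ^ 2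
        = (C : ℂ) + I * D * R := by
      rw [hL2m, div_eq_iff hγc]
      push_cast
      rw [div_neg, e1, e2, ← hDc]
      linear_combination (-1 : ℂ) * hCc
    rwa [heq] at hm
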